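/- With w = 1+zu and Λ the operator ΛH = (1+u)(1+zu)(H(z;u)−H(z;0))/u, for all integers 1 ≤ k ≤ m one has Λ^{(k)}(1/w^m) = (1−z)^k/w^{m−k} − Σ_{i=k}^{m−1} Σ_{j=1}^{k} (−1)^{k+j} z^{k−j+1} w^{-(m−i−1)} C(k, j−1) C(i−j+1, k−j) + Σ_{i=1}^{k−1} Σ_{j=1}^{i} (−1)^{j−1} z^j w^{k−i} C(i−1, j−1) C(m−k+j−1, j) − w^k. -/

import Mathlib

open Polynomial PowerSeries

/-- w = 1 + zu, as a power series in z with coefficients in ℚ[u]. -/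
noncomputable def w : PowerSeries (Polynomial ℚ) :=
  1 + PowerSeries.X * PowerSeries.C Polynomial.X

/-- The operator Λ : H(z;u) ↦ (1+u)(1+zu)(H(z;u) − H(z;0))/u, acting on ℚ[u][[z]]. -/
noncomputable def Lam (H : PowerSeries (Polynomial ℚ)) : PowerSeries (Polynomial ℚ) :=
  PowerSeries.C (1 + Polynomial.X) * w *
    PowerSeries.mk fun n =>
      (PowerSeries.coeff n H
        - Polynomial.C ((PowerSeries.coeff n H).eval 0)) /ₘ Polynomial.X

abbrev R := PowerSeries (Polynomial ℚ)

noncomputable def cU : R := PowerSeries.C Polynomial.X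

noncomputable def φ : Polynomial ℚ →+* Polynomial ℚ :=
  (Polynomial.C).comp (Polynomial.evalRingHom 0)

noncomputable def E : R →+* R := PowerSeries.map φ

lemma w_def : w = 1 + PowerSeries.X * cU := rfl

lemma cU_ne : cU ≠ 0 := by
  intro h
  have := congrArg (PowerSeries.constantCoeff) h
  simp [cU] at this

lemma key (H : R) :
    cU * Lam H = PowerSeries.C (1 + Polynomial.X) * w * (H - E H) := by
  have h : cU * (PowerSeries.mk fun n =>
      (PowerSeries.coeff n H
        - Polynomial.C ((PowerSeries.coeff n H).eval 0)) /ₘ Polynomial.X)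
      = H - E H := by
    ext n
    have hd : Polynomial.X ∣ (PowerSeries.coeff n H
        - Polynomial.C ((PowerSeries.coeff n H).eval 0)) := by
      rw [Polynomial.X_dvd_iff]
      simp [Polynomial.coeff_zero_eq_eval_zero]
    have hm := Polynomial.modByMonic_add_div
      (PowerSeries.coeff n H
        - Polynomial.C ((PowerSeries.coeff n H).eval 0)) Polynomial.X
    rw [(Polynomial.modByMonic_eq_zero_iff_dvd Polynomial.monic_X).2 hd] at hm
    simp only [cU, zero_add] at hm ⊢
    rw [PowerSeries.coeff_C_mul, PowerSeries.coeff_mk, hm]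
    simp [E, φ, PowerSeries.coeff_map]
  rw [Lam, ← h]; ring

lemma lam_eq {H Y : R}
    (h : PowerSeries.C (1 + Polynomial.X) * w * (H - E H) = cU * Y) :
    Lam H = Y :=
  mul_left_cancel₀ cU_ne (by rw [key, h])

lemma E_X : E PowerSeries.X = PowerSeries.X := by
  unfold E
  exact PowerSeries.map_X (f := φ)

lemma E_cU : E cU = 0 := by
  simp [E, cU, φ, PowerSeries.map_C]

lemma E_w : E w = 1 := by
  rw [w_def, map_add, map_mul, map_one, E_X, E_cU, mul_zero, add_zero]

lemma E_wi {wi : R} (hwi : w * wi = 1) : E wi = 1 := by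
  have := congrArg E hwi
  rw [map_mul, map_one, E_w, one_mul] at this
  exact this

lemma Lam_add (A B : R) : Lam (A + B) = Lam A + Lam B :=
  lam_eq (by rw [show E (A + B) = E A + E B from map_add E A B]; linear_combination (-1 : R) * key A - key B)

lemma Lam_smul {f : R} (hf : E f = f) (H : R) : Lam (f * H) = f * Lam H :=
  lam_eq (by rw [show E (f * H) = E f * E H from map_mul E f H, hf]; linear_combination (-f) * key H)

lemma Lam_one : Lam (1 : R) = 0 :=
  lam_eq (by rw [map_one]; ring)

noncomputable def LamHom : R →+ R :=
  AddMonoidHom.mk' Lam Lam_add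

lemma LamHom_apply (H : R) : LamHom H = Lam H := rfl

lemma Lam_wi_succ {wi : R} (hwi : w * wi = 1) (n : ℕ) :
    Lam (wi ^ (n + 1)) = (1 - PowerSeries.X) * wi ^ n - w
      - PowerSeries.X * ∑ t ∈ Finset.range n, wi ^ t := by
  apply lam_eq
  rw [map_pow, E_wi hwi, one_pow]
  have hg : (∑ t ∈ Finset.range (n+1), wi ^ t) * (wi - 1) = wi ^ (n+1) - 1 :=
    geom_sum_mul wi (n+1)
  rw [Finset.sum_range_succ] at hg
  have h3 : w * wi ^ (n+1) = wi ^ n := by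
    rw [pow_succ]; linear_combination wi ^ n * hwi
  have h2 : w * (wi ^ (n+1) - 1)
      = -(PowerSeries.X * cU) * ((∑ t ∈ Finset.range n, wi ^ t) + wi ^ n) := by
    rw [w_def] at hwi ⊢
    linear_combination (-(1 + PowerSeries.X * cU)) * hg
      + ((∑ t ∈ Finset.range n, wi ^ t) + wi ^ n) * hwi
  have h4 : PowerSeries.X * cU * ((∑ t ∈ Finset.range n, wi ^ t) + wi ^ n) = w - wi ^ n := by
    linear_combination h2 - h3
  have hC : PowerSeries.C (1 + Polynomial.X) = 1 + cU := by
    rw [map_add, map_one]; rfl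
  rw [hC]
  linear_combination (1 + cU) * h3 + h4

lemma Lam_w_succ (n : ℕ) :
    Lam (w ^ (n + 1)) = w ^ (n + 2) - w
      + PowerSeries.X * ∑ t ∈ Finset.range (n + 1), w ^ (t + 1) := by
  apply lam_eq
  rw [map_pow, E_w, one_pow]
  have hg : (∑ t ∈ Finset.range (n+1), w ^ t) * (w - 1) = w ^ (n+1) - 1 :=
    geom_sum_mul w (n+1)
  have hmul : ∑ t ∈ Finset.range (n+1), w ^ (t+1)
      = w * ∑ t ∈ Finset.range (n+1), w ^ t := by
    rw [Finset.mul_sum]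
    exact Finset.sum_congr rfl fun t _ => by rw [pow_succ]; ring
  have htel : (w - 1) * ∑ t ∈ Finset.range (n+1), w ^ (t+1) = w ^ (n+2) - w := by
    have h := Finset.sum_range_sub (fun t => w ^ (t+1)) (n+1)
    rw [Finset.mul_sum]
    calc ∑ t ∈ Finset.range (n+1), (w - 1) * w ^ (t+1)
        = ∑ t ∈ Finset.range (n+1), (w ^ (t+1+1) - w ^ (t+1)) := by
          exact Finset.sum_congr rfl fun t _ => by rw [pow_succ]; ring
      _ = w ^ (n+1+1) - w ^ (0+1) := h
      _ = w ^ (n+2) - w := by rw [pow_one]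
  have hC : PowerSeries.C (1 + Polynomial.X) = 1 + cU := by
    rw [map_add, map_one]; rfl
  rw [hC]
  rw [w_def] at hg hmul htel ⊢
  linear_combination (-((1:R) + cU) * (1 + PowerSeries.X * cU)) * hg
    - ((1 + cU) * (PowerSeries.X * cU)) * hmul + cU * htel

lemma sum_ite_lt (f : ℕ → R) {c n : ℕ} (h : c ≤ n) :
    ∑ x ∈ Finset.range n, (if x < c then f x else 0) = ∑ x ∈ Finset.range c, f x := by
  rw [← Finset.sum_filter]
  congr 1
  ext x
  simp only [Finset.mem_filter, Finset.mem_range]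
  omega

lemma expand_ite (F : ℕ → R) (n a : ℕ) (ha : a < n) :
    ∑ t ∈ Finset.range (n - 1 - a), F t
      = ∑ b ∈ Finset.range n, (if a < b then F (n - 1 - b) else 0) := by
  rw [← Finset.sum_range_reflect (fun b => if a < b then F (n - 1 - b) else 0) n]
  rw [← sum_ite_lt F (show n - 1 - a ≤ n by omega)]
  apply Finset.sum_congr rfl
  intro j hj
  simp only [Finset.mem_range] at hj
  have h2 : n - 1 - (n - 1 - j) = j := by omega
  by_cases hc : j < n - 1 - a
  · rw [if_pos hc, if_pos (show a < n - 1 - j by omega), h2]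
  · rw [if_neg hc, if_neg (show ¬ a < n - 1 - j by omega)]

lemma tri (n : ℕ) (g F : ℕ → R) :
    ∑ a ∈ Finset.range n, g a * ∑ t ∈ Finset.range (n - 1 - a), F t
      = ∑ b ∈ Finset.range n, (∑ a ∈ Finset.range b, g a) * F (n - 1 - b) := by
  have h1 : ∀ a ∈ Finset.range n, g a * ∑ t ∈ Finset.range (n - 1 - a), F t
      = ∑ b ∈ Finset.range n, (if a < b then g a * F (n - 1 - b) else 0) := by
    intro a ha
    rw [expand_ite F n a (Finset.mem_range.1 ha), Finset.mul_sum]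
    exact Finset.sum_congr rfl fun b _ => by split <;> simp
  rw [Finset.sum_congr rfl h1, Finset.sum_comm]
  apply Finset.sum_congr rfl
  intro b hb
  rw [Finset.sum_mul, ← sum_ite_lt (fun a => g a * F (n - 1 - b))
    (le_of_lt (Finset.mem_range.1 hb))]

lemma pascal_cast (n k : ℕ) :
    (((n+1).choose (k+1) : ℕ) : R) = (n.choose k : R) + (n.choose (k+1) : R) := by
  rw [Nat.choose_succ_succ]
  push_cast
  ring

lemma hockey (c a : ℕ) :
    ∑ x ∈ Finset.range a, (((x+c+1).choose c : ℕ) : R)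
      = (((a+c+1).choose (c+1) : ℕ) : R) - 1 := by
  induction a with
  | zero => simp
  | succ a ih =>
      rw [Finset.sum_range_succ, ih,
        show a+1+c+1 = (a+c+1)+1 by omega, pascal_cast (a+c+1) c]
      ring

lemma one_sub_X_pow (k : ℕ) :
    (1 - PowerSeries.X : R) ^ k
      = ∑ c ∈ Finset.range (k+1), (-1 : R) ^ c * PowerSeries.X ^ c * (k.choose c : R) := by
  rw [show (1 - PowerSeries.X : R) = -PowerSeries.X + 1 by ring, add_pow]
  exact Finset.sum_congr rfl fun c _ => by rw [neg_pow]; ring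

noncomputable def tA (k a c : ℕ) : R :=
  (-1 : R) ^ c * PowerSeries.X ^ (c+1) * (k.choose (c+1) : R) * ((a+c+1).choose c : R)

noncomputable def tB (d e f : ℕ) : R :=
  (-1 : R) ^ f * PowerSeries.X ^ (f+1) * (e.choose f : R) * ((d+f).choose (f+1) : R)

lemma hA (k a : ℕ) :
    ∑ a' ∈ Finset.range a, ∑ c ∈ Finset.range k, tA k a' c
      = ∑ c ∈ Finset.range k, (-1 : R) ^ c * PowerSeries.X ^ (c+1) * (k.choose (c+1) : R)
          * ((((a+c+1).choose (c+1) : ℕ) : R) - 1) := by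
  rw [Finset.sum_comm]
  apply Finset.sum_congr rfl
  intro c _
  calc ∑ a' ∈ Finset.range a, tA k a' c
      = ((-1 : R) ^ c * PowerSeries.X ^ (c+1) * (k.choose (c+1) : R))
        * ∑ a' ∈ Finset.range a, (((a'+c+1).choose c : ℕ) : R) := by
        rw [Finset.mul_sum]
        exact Finset.sum_congr rfl fun a' _ => by simp only [tA]
    _ = _ := by rw [hockey]

lemma I1 (K a : ℕ) :
    ∑ c ∈ Finset.range (K+2), tA (K+2) a c
      = PowerSeries.X * (1 - PowerSeries.X) ^ (K+1)
        + (1 - PowerSeries.X) * ∑ c ∈ Finset.range (K+1), tA (K+1) a c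
        - PowerSeries.X * ∑ a' ∈ Finset.range a, ∑ c ∈ Finset.range (K+1), tA (K+1) a' c := by
  rw [hA]
  have hL : ∑ c ∈ Finset.range (K+2), tA (K+2) a c
      = (∑ c ∈ Finset.range (K+2),
          (-1 : R) ^ c * PowerSeries.X ^ (c+1) * ((K+1).choose c : R) * ((a+c+1).choose c : R))
        + ∑ c ∈ Finset.range (K+1), tA (K+1) a c := by
    have hterm : ∀ c ∈ Finset.range (K+2), tA (K+2) a c
        = (-1 : R) ^ c * PowerSeries.X ^ (c+1) * ((K+1).choose c : R) * ((a+c+1).choose c : R)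
          + tA (K+1) a c := by
      intro c _
      simp only [tA]
      rw [show (K+2) = (K+1)+1 from rfl, pascal_cast (K+1) c]
      ring
    rw [Finset.sum_congr rfl hterm, Finset.sum_add_distrib]
    congr 1
    rw [Finset.sum_range_succ]
    have h0 : (K+1).choose (K+1+1) = 0 := Nat.choose_eq_zero_of_lt (by omega)
    simp [tA, h0]
  rw [hL]
  have hX : PowerSeries.X * (1 - PowerSeries.X) ^ (K+1)
      = ∑ c ∈ Finset.range (K+2), (-1 : R) ^ c * PowerSeries.X ^ (c+1) * ((K+1).choose c : R) := by
    rw [one_sub_X_pow, Finset.mul_sum]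
    exact Finset.sum_congr rfl fun c _ => by ring
  rw [hX]
  rw [Finset.sum_range_succ' (fun c => (-1 : R) ^ c * PowerSeries.X ^ (c+1)
        * ((K+1).choose c : R) * ((a+c+1).choose c : R)) (K+1),
      Finset.sum_range_succ' (fun c => (-1 : R) ^ c * PowerSeries.X ^ (c+1)
        * ((K+1).choose c : R)) (K+1)]
  have e1 : ∑ c ∈ Finset.range (K+1), (-1 : R) ^ (c+1) * PowerSeries.X ^ ((c+1)+1)
        * ((K+1).choose (c+1) : R) * ((a+(c+1)+1).choose (c+1) : R)
      = ∑ c ∈ Finset.range (K+1), ((-1 : R) ^ (c+1) * PowerSeries.X ^ ((c+1)+1)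
          * ((K+1).choose (c+1) : R))
        - ∑ c ∈ Finset.range (K+1), PowerSeries.X * tA (K+1) a c
        - ∑ c ∈ Finset.range (K+1), PowerSeries.X * ((-1 : R) ^ c * PowerSeries.X ^ (c+1)
            * ((K+1).choose (c+1) : R) * ((((a+c+1).choose (c+1) : ℕ) : R) - 1)) := by
    rw [← Finset.sum_sub_distrib, ← Finset.sum_sub_distrib]
    apply Finset.sum_congr rfl
    intro c _
    simp only [tA]
    rw [show a+(c+1)+1 = (a+c+1)+1 by omega, pascal_cast (a+c+1) c]
    ring
  have e2 : PowerSeries.X * ∑ c ∈ Finset.range (K+1), ((-1 : R) ^ c * PowerSeries.X ^ (c+1)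
        * ((K+1).choose (c+1) : R) * ((((a+c+1).choose (c+1) : ℕ) : R) - 1))
      = ∑ c ∈ Finset.range (K+1), PowerSeries.X * ((-1 : R) ^ c * PowerSeries.X ^ (c+1)
        * ((K+1).choose (c+1) : R) * ((((a+c+1).choose (c+1) : ℕ) : R) - 1)) :=
    Finset.mul_sum _ _ _
  have e3 : ∑ c ∈ Finset.range (K+1), PowerSeries.X * tA (K+1) a c
      = PowerSeries.X * ∑ c ∈ Finset.range (K+1), tA (K+1) a c :=
    (Finset.mul_sum _ _ _).symm
  have h0 : ((-1 : R) ^ 0 * PowerSeries.X ^ (0+1) * ((K+1).choose 0 : R)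
        * ((a+0+1).choose 0 : R))
      = (-1 : R) ^ 0 * PowerSeries.X ^ (0+1) * ((K+1).choose 0 : R) := by
    simp
  linear_combination e1 + h0 - e3 + e2

lemma I2 (d : ℕ) : ∀ e : ℕ,
    ∑ f ∈ Finset.range (e+1), tB d e f + PowerSeries.X
      = ∑ f ∈ Finset.range (e+1), tB (d+1) e f
        + PowerSeries.X * ∑ e' ∈ Finset.range e, ∑ f ∈ Finset.range (e'+1), tB (d+1) e' f := by
  intro e
  induction e with
  | zero =>
      simp only [zero_add, Finset.sum_range_one, Finset.range_zero, Finset.sum_empty,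
        mul_zero, add_zero, tB]
      push_cast [Nat.choose_one_right, Nat.choose_zero_right]
      ring
  | succ e ih =>
      rw [Finset.sum_range_succ (fun e' => ∑ f ∈ Finset.range (e'+1), tB (d+1) e' f) e]
      have h1 : ∀ D : ℕ, ∑ f ∈ Finset.range (e+2), tB D (e+1) f
          = tB D e 0 + ∑ f ∈ Finset.range (e+1), tB D (e+1) (f+1) := by
        intro D
        rw [Finset.sum_range_succ' (tB D (e+1)) (e+1)]
        have h : tB D (e+1) 0 = tB D e 0 := by simp [tB]
        rw [h]; ring
      have h2 : ∀ D : ℕ, ∑ f ∈ Finset.range (e+1), tB D e f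
          = tB D e 0 + ∑ f ∈ Finset.range (e+1), tB D e (f+1) := by
        intro D
        rw [Finset.sum_range_succ' (tB D e) e,
          Finset.sum_range_succ (fun f => tB D e (f+1)) e]
        have hz : tB D e (e+1) = 0 := by
          have : e.choose (e+1) = 0 := Nat.choose_eq_zero_of_lt (by omega)
          simp [tB, this]
        rw [hz]; ring
      have h5 : ∑ f ∈ Finset.range (e+1), tB d (e+1) (f+1)
            - ∑ f ∈ Finset.range (e+1), tB d e (f+1)
          = ∑ f ∈ Finset.range (e+1), tB (d+1) (e+1) (f+1)
            - ∑ f ∈ Finset.range (e+1), tB (d+1) e (f+1)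
            + PowerSeries.X * ∑ f ∈ Finset.range (e+1), tB (d+1) e f := by
        rw [Finset.mul_sum, ← Finset.sum_sub_distrib, ← Finset.sum_sub_distrib,
          ← Finset.sum_add_distrib]
        apply Finset.sum_congr rfl
        intro f _
        simp only [tB]
        rw [show e+1 = e+1 from rfl, pascal_cast e f,
          show d+1+(f+1) = (d+(f+1))+1 by omega, pascal_cast (d+(f+1)) (f+1),
          show d+1+f = d+(f+1) by omega]
        ring
      linear_combination ih + h1 d - h2 d - h1 (d+1) + h2 (d+1) + h5

lemma Ucl (d : ℕ) : ∀ K : ℕ,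
    ∑ e ∈ Finset.range K, ∑ f ∈ Finset.range (e+1), tB (d+1) e f
      = 1 - ∑ f ∈ Finset.range (K+1),
          (-1 : R) ^ f * PowerSeries.X ^ f * (K.choose f : R) * ((d+f).choose f : R) := by
  intro K
  induction K with
  | zero => simp
  | succ K ih =>
      rw [Finset.sum_range_succ, ih]
      have hQ1 : ∑ f ∈ Finset.range (K+2),
            (-1 : R) ^ f * PowerSeries.X ^ f * ((K+1).choose f : R) * ((d+f).choose f : R)
          = (∑ f ∈ Finset.range (K+1), (-1 : R) ^ (f+1) * PowerSeries.X ^ (f+1)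
              * ((K+1).choose (f+1) : R) * ((d+(f+1)).choose (f+1) : R)) + 1 := by
        rw [Finset.sum_range_succ' (fun f => (-1 : R) ^ f * PowerSeries.X ^ f
          * ((K+1).choose f : R) * ((d+f).choose f : R)) (K+1)]
        simp
      have hQ0 : ∑ f ∈ Finset.range (K+1),
            (-1 : R) ^ f * PowerSeries.X ^ f * (K.choose f : R) * ((d+f).choose f : R)
          = (∑ f ∈ Finset.range (K+1), (-1 : R) ^ (f+1) * PowerSeries.X ^ (f+1)
              * (K.choose (f+1) : R) * ((d+(f+1)).choose (f+1) : R)) + 1 := by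
        rw [Finset.sum_range_succ' (fun f => (-1 : R) ^ f * PowerSeries.X ^ f
          * (K.choose f : R) * ((d+f).choose f : R)) K,
          Finset.sum_range_succ (fun f => (-1 : R) ^ (f+1) * PowerSeries.X ^ (f+1)
          * (K.choose (f+1) : R) * ((d+(f+1)).choose (f+1) : R)) K]
        have hz : K.choose (K+1) = 0 := Nat.choose_eq_zero_of_lt (by omega)
        simp [hz]
      have hper : ∑ f ∈ Finset.range (K+1), tB (d+1) K f
          = ∑ f ∈ Finset.range (K+1),
              ((-1 : R) ^ (f+1) * PowerSeries.X ^ (f+1)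
                  * (K.choose (f+1) : R) * ((d+(f+1)).choose (f+1) : R)
                - (-1 : R) ^ (f+1) * PowerSeries.X ^ (f+1)
                  * ((K+1).choose (f+1) : R) * ((d+(f+1)).choose (f+1) : R)) := by
        apply Finset.sum_congr rfl
        intro f _
        simp only [tB]
        rw [pascal_cast K f, show d+1+f = d+(f+1) by omega]
        ring
      rw [hper, Finset.sum_sub_distrib]
      linear_combination hQ1 - hQ0

lemma I3 (K d : ℕ) :
    ∑ f ∈ Finset.range (K+1), tB d K f
      = -(1 - PowerSeries.X) ^ (K+1)
        + ∑ a ∈ Finset.range d, ∑ c ∈ Finset.range (K+1), tA (K+1) a c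
        + (PowerSeries.X - 1)
          * ∑ e ∈ Finset.range K, ∑ f ∈ Finset.range (e+1), tB (d+1) e f
        + 1 - PowerSeries.X := by
  rw [hA (K+1) d, Ucl d K]
  have hWM : ∑ c ∈ Finset.range (K+1), (-1 : R) ^ c * PowerSeries.X ^ (c+1)
        * ((K+1).choose (c+1) : R) * ((((d+c+1).choose (c+1) : ℕ) : R) - 1)
      = (∑ c ∈ Finset.range (K+1), (-1 : R) ^ c * PowerSeries.X ^ (c+1)
          * ((K+1).choose (c+1) : R) * ((d+c+1).choose (c+1) : R))
        - ∑ c ∈ Finset.range (K+1), (-1 : R) ^ c * PowerSeries.X ^ (c+1)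
          * ((K+1).choose (c+1) : R) := by
    rw [← Finset.sum_sub_distrib]
    exact Finset.sum_congr rfl fun c _ => by ring
  have hmid : (1 - PowerSeries.X : R) ^ (K+1)
      = 1 - ∑ c ∈ Finset.range (K+1), (-1 : R) ^ c * PowerSeries.X ^ (c+1)
          * ((K+1).choose (c+1) : R) := by
    rw [one_sub_X_pow (K+1),
      Finset.sum_range_succ' (fun c => (-1 : R) ^ c * PowerSeries.X ^ c
        * ((K+1).choose c : R)) (K+1)]
    have : ∑ c ∈ Finset.range (K+1), (-1 : R) ^ (c+1) * PowerSeries.X ^ (c+1)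
          * ((K+1).choose (c+1) : R)
        = ∑ c ∈ Finset.range (K+1), (-(1:R)) * ((-1 : R) ^ c * PowerSeries.X ^ (c+1)
          * ((K+1).choose (c+1) : R)) :=
      Finset.sum_congr rfl fun c _ => by ring
    rw [this, ← Finset.mul_sum]
    simp
    ring
  have hW : ∑ c ∈ Finset.range (K+1), (-1 : R) ^ c * PowerSeries.X ^ (c+1)
        * ((K+1).choose (c+1) : R) * ((d+c+1).choose (c+1) : R)
      = (∑ c ∈ Finset.range (K+1), (-1 : R) ^ c * PowerSeries.X ^ (c+1)
          * (K.choose c : R) * ((d+c+1).choose (c+1) : R))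
        + ∑ c ∈ Finset.range (K+1), (-1 : R) ^ c * PowerSeries.X ^ (c+1)
          * (K.choose (c+1) : R) * ((d+c+1).choose (c+1) : R) := by
    rw [← Finset.sum_add_distrib]
    exact Finset.sum_congr rfl fun c _ => by rw [pascal_cast K c]; ring
  have hQp : ∑ f ∈ Finset.range (K+1),
        (-1 : R) ^ f * PowerSeries.X ^ f * (K.choose f : R) * ((d+f).choose f : R)
      = 1 - ∑ c ∈ Finset.range (K+1), (-1 : R) ^ c * PowerSeries.X ^ (c+1)
          * (K.choose (c+1) : R) * ((d+c+1).choose (c+1) : R) := by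
    have hz : K.choose (K+1) = 0 := Nat.choose_eq_zero_of_lt (by omega)
    calc ∑ f ∈ Finset.range (K+1),
          (-1 : R) ^ f * PowerSeries.X ^ f * (K.choose f : R) * ((d+f).choose f : R)
        = (∑ f ∈ Finset.range K, (-1 : R) ^ (f+1) * PowerSeries.X ^ (f+1)
            * (K.choose (f+1) : R) * ((d+(f+1)).choose (f+1) : R)) + 1 := by
          rw [Finset.sum_range_succ' (fun f => (-1 : R) ^ f * PowerSeries.X ^ f
            * (K.choose f : R) * ((d+f).choose f : R)) K]
          simp
      _ = (∑ f ∈ Finset.range K, (-(1:R)) * ((-1 : R) ^ f * PowerSeries.X ^ (f+1)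
            * (K.choose (f+1) : R) * ((d+f+1).choose (f+1) : R))) + 1 := by
          refine congrArg (· + 1) (Finset.sum_congr rfl fun f _ => ?_)
          rw [show d+(f+1) = d+f+1 by omega]
          ring
      _ = -(∑ f ∈ Finset.range K, (-1 : R) ^ f * PowerSeries.X ^ (f+1)
            * (K.choose (f+1) : R) * ((d+f+1).choose (f+1) : R)) + 1 := by
          rw [← Finset.mul_sum]; ring
      _ = 1 - ∑ c ∈ Finset.range (K+1), (-1 : R) ^ c * PowerSeries.X ^ (c+1)
            * (K.choose (c+1) : R) * ((d+c+1).choose (c+1) : R) := by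
          rw [Finset.sum_range_succ (fun c => (-1 : R) ^ c * PowerSeries.X ^ (c+1)
            * (K.choose (c+1) : R) * ((d+c+1).choose (c+1) : R)) K, hz]
          push_cast
          ring
  have hLX : ∑ c ∈ Finset.range (K+1), (-1 : R) ^ c * PowerSeries.X ^ (c+1)
        * (K.choose c : R) * ((d+c+1).choose (c+1) : R)
      = (∑ f ∈ Finset.range (K+1), tB d K f)
        + PowerSeries.X * ∑ f ∈ Finset.range (K+1),
            (-1 : R) ^ f * PowerSeries.X ^ f * (K.choose f : R) * ((d+f).choose f : R) := by
    rw [Finset.mul_sum, ← Finset.sum_add_distrib]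
    apply Finset.sum_congr rfl
    intro c _
    simp only [tB]
    rw [show d+c+1 = (d+c)+1 by omega, pascal_cast (d+c) c]
    ring
  linear_combination (-1 : R) * hWM + hmid - hW - hQp - hLX

noncomputable def G (wi : R) (k d : ℕ) : R :=
  (1 - PowerSeries.X)^k * wi^d
  - ∑ a ∈ Finset.range d, (∑ c ∈ Finset.range k, tA k a c) * wi^(d-1-a)
  + ∑ e ∈ Finset.range (k-1), (∑ f ∈ Finset.range (e+1), tB d e f) * w^(k-1-e)
  - w^k

lemma G_succ (wi : R) (K d : ℕ) :
    G wi (K+1) d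
      = (1 - PowerSeries.X)^(K+1) * wi^d
        - ∑ a ∈ Finset.range d, (∑ c ∈ Finset.range (K+1), tA (K+1) a c) * wi^(d-1-a)
        + ∑ e ∈ Finset.range K, (∑ f ∈ Finset.range (e+1), tB d e f) * w^(K-e)
        - w^(K+1) := by
  simp only [G, Nat.add_sub_cancel]

lemma Lam_scalar {f : R} (hf : E f = f) : Lam f = 0 :=
  lam_eq (by rw [hf]; ring)

lemma Efix_tA (k a c : ℕ) : E (tA k a c) = tA k a c := by
  simp [tA, E_X]

lemma Efix_tB (d e f : ℕ) : E (tB d e f) = tB d e f := by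
  simp [tB, E_X]

lemma base {wi : R} (hwi : w * wi = 1) (d : ℕ) :
    Lam (wi ^ (1 + d)) = G wi 1 d := by
  rw [show 1 + d = d + 1 by omega, Lam_wi_succ hwi d, G_succ wi 0 d]
  have h1 : ∀ a ∈ Finset.range d, (∑ c ∈ Finset.range 1, tA 1 a c) * wi^(d-1-a)
      = PowerSeries.X * wi^(d-1-a) := by
    intro a _
    rw [Finset.sum_range_one]
    simp [tA]
  rw [Finset.sum_congr rfl h1, ← Finset.mul_sum,
    Finset.sum_range_reflect (fun t => wi^t) d]
  simp
  ring

lemma stepR (wi : R) (K d : ℕ) :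
    G wi (K+1+1) d
      = (1 - PowerSeries.X)^(K+1) * ((1 - PowerSeries.X) * wi^d)
        - (PowerSeries.X * (1 - PowerSeries.X)^(K+1))
            * (∑ a ∈ Finset.range d, wi^(d-1-a))
        - (1 - PowerSeries.X) * (∑ a ∈ Finset.range d,
            (∑ c ∈ Finset.range (K+1), tA (K+1) a c) * wi^(d-1-a))
        + ∑ b ∈ Finset.range d, (PowerSeries.X * ∑ a ∈ Finset.range b,
            ∑ c ∈ Finset.range (K+1), tA (K+1) a c) * wi^(d-1-b)
        + ∑ e ∈ Finset.range K, (∑ f ∈ Finset.range (e+1), tB (d+1) e f) * w^(K+1-e)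
        + ∑ e ∈ Finset.range K, (PowerSeries.X * ∑ e' ∈ Finset.range e,
            ∑ f ∈ Finset.range (e'+1), tB (d+1) e' f) * w^(K+1-e)
        - PowerSeries.X * (∑ e ∈ Finset.range K, w^(K+1-e))
        + (-(1 - PowerSeries.X)^(K+1)
            + (∑ a ∈ Finset.range d, ∑ c ∈ Finset.range (K+1), tA (K+1) a c)
            + (PowerSeries.X - 1)
              * (∑ e ∈ Finset.range K, ∑ f ∈ Finset.range (e+1), tB (d+1) e f)
            + 1 - PowerSeries.X) * w
        - w^(K+2) := by
  rw [G_succ wi (K+1) d]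
  simp only [show K+1+1 = K+2 from rfl]
  have hr1 : ∑ a ∈ Finset.range d, (∑ c ∈ Finset.range (K+2), tA (K+2) a c) * wi^(d-1-a)
      = (PowerSeries.X * (1 - PowerSeries.X)^(K+1))
          * (∑ a ∈ Finset.range d, wi^(d-1-a))
        + (1 - PowerSeries.X) * (∑ a ∈ Finset.range d,
            (∑ c ∈ Finset.range (K+1), tA (K+1) a c) * wi^(d-1-a))
        - ∑ b ∈ Finset.range d, (PowerSeries.X * ∑ a ∈ Finset.range b,
            ∑ c ∈ Finset.range (K+1), tA (K+1) a c) * wi^(d-1-b) := by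
    rw [Finset.mul_sum, Finset.mul_sum, ← Finset.sum_add_distrib, ← Finset.sum_sub_distrib]
    apply Finset.sum_congr rfl
    intro a _
    rw [I1 K a]
    ring
  have hr2 : ∑ e ∈ Finset.range K, (∑ f ∈ Finset.range (e+1), tB d e f) * w^(K+1-e)
      = ∑ e ∈ Finset.range K, (∑ f ∈ Finset.range (e+1), tB (d+1) e f) * w^(K+1-e)
        + ∑ e ∈ Finset.range K, (PowerSeries.X * ∑ e' ∈ Finset.range e,
            ∑ f ∈ Finset.range (e'+1), tB (d+1) e' f) * w^(K+1-e)
        - PowerSeries.X * (∑ e ∈ Finset.range K, w^(K+1-e)) := by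
    rw [Finset.mul_sum, ← Finset.sum_add_distrib, ← Finset.sum_sub_distrib]
    apply Finset.sum_congr rfl
    intro e _
    linear_combination (w^(K+1-e)) * I2 d e
  have hsplit : ∑ e ∈ Finset.range (K+1), (∑ f ∈ Finset.range (e+1), tB d e f) * w^(K+1-e)
      = (∑ e ∈ Finset.range K, (∑ f ∈ Finset.range (e+1), tB d e f) * w^(K+1-e))
        + (∑ f ∈ Finset.range (K+1), tB d K f) * w := by
    rw [Finset.sum_range_succ, show K+1-K = 1 by omega, pow_one]
  have hI3 := I3 K d
  linear_combination (-1 : R) * hr1 + hsplit + hr2 + w * hI3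

lemma Lam_neg (x : R) : Lam (-x) = -Lam x := by
  have h := Lam_smul (f := (-1 : R)) (by simp) x
  simpa using h

lemma Lam_sub (x y : R) : Lam (x - y) = Lam x - Lam y := by
  rw [sub_eq_add_neg, Lam_add, Lam_neg, sub_eq_add_neg]

lemma tri' (n : ℕ) (g F : ℕ → R) :
    ∑ a ∈ Finset.range (n+1), g a * ∑ t ∈ Finset.range (n-a), F t
      = ∑ b ∈ Finset.range (n+1), (∑ a ∈ Finset.range b, g a) * F (n-b) := by
  have h := tri (n+1) g F
  simpa only [Nat.add_sub_cancel] using h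

lemma stepL {wi : R} (hwi : w * wi = 1) (K d : ℕ) :
    Lam (G wi (K+1) (d+1))
      = (1 - PowerSeries.X)^(K+1) * ((1 - PowerSeries.X) * wi^d)
        - (PowerSeries.X * (1 - PowerSeries.X)^(K+1))
            * (∑ a ∈ Finset.range d, wi^(d-1-a))
        - (1 - PowerSeries.X) * (∑ a ∈ Finset.range d,
            (∑ c ∈ Finset.range (K+1), tA (K+1) a c) * wi^(d-1-a))
        + ∑ b ∈ Finset.range d, (PowerSeries.X * ∑ a ∈ Finset.range b,
            ∑ c ∈ Finset.range (K+1), tA (K+1) a c) * wi^(d-1-b)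
        + ∑ e ∈ Finset.range K, (∑ f ∈ Finset.range (e+1), tB (d+1) e f) * w^(K+1-e)
        + ∑ e ∈ Finset.range K, (PowerSeries.X * ∑ e' ∈ Finset.range e,
            ∑ f ∈ Finset.range (e'+1), tB (d+1) e' f) * w^(K+1-e)
        - PowerSeries.X * (∑ e ∈ Finset.range K, w^(K+1-e))
        + (-(1 - PowerSeries.X)^(K+1)
            + (∑ a ∈ Finset.range d, ∑ c ∈ Finset.range (K+1), tA (K+1) a c)
            + (PowerSeries.X - 1)
              * (∑ e ∈ Finset.range K, ∑ f ∈ Finset.range (e+1), tB (d+1) e f)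
            + 1 - PowerSeries.X) * w
        - w^(K+2) := by
  have EfixSA : ∀ a : ℕ, E (∑ c ∈ Finset.range (K+1), tA (K+1) a c)
      = ∑ c ∈ Finset.range (K+1), tA (K+1) a c := by
    intro a
    rw [map_sum]
    exact Finset.sum_congr rfl fun c _ => Efix_tA (K+1) a c
  have EfixSB : ∀ e : ℕ, E (∑ f ∈ Finset.range (e+1), tB (d+1) e f)
      = ∑ f ∈ Finset.range (e+1), tB (d+1) e f := by
    intro e
    rw [map_sum]
    exact Finset.sum_congr rfl fun f _ => Efix_tB (d+1) e f
  rw [G_succ wi K (d+1)]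
  simp only [Nat.add_sub_cancel]
  rw [Lam_sub, Lam_add, Lam_sub]
  have hA' : Lam ((1 - PowerSeries.X)^(K+1) * wi^(d+1))
      = (1 - PowerSeries.X)^(K+1) * ((1 - PowerSeries.X) * wi^d - w
          - PowerSeries.X * ∑ t ∈ Finset.range d, wi^t) := by
    rw [Lam_smul (by simp [E_X]), Lam_wi_succ hwi d]
  have hB' : Lam (∑ a ∈ Finset.range (d+1),
        (∑ c ∈ Finset.range (K+1), tA (K+1) a c) * wi^(d-a))
      = ∑ a ∈ Finset.range d, (∑ c ∈ Finset.range (K+1), tA (K+1) a c)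
          * ((1 - PowerSeries.X) * wi^(d-1-a) - w
            - PowerSeries.X * ∑ t ∈ Finset.range (d-1-a), wi^t) := by
    rw [show Lam (∑ a ∈ Finset.range (d+1),
        (∑ c ∈ Finset.range (K+1), tA (K+1) a c) * wi^(d-a))
      = ∑ a ∈ Finset.range (d+1),
          Lam ((∑ c ∈ Finset.range (K+1), tA (K+1) a c) * wi^(d-a))
      from map_sum LamHom _ _]
    rw [Finset.sum_range_succ, Nat.sub_self, pow_zero, mul_one, Lam_scalar (EfixSA d),
      add_zero]
    apply Finset.sum_congr rfl
    intro a ha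
    have had : d - a = (d-1-a)+1 := by
      have := Finset.mem_range.1 ha; omega
    rw [had, Lam_smul (EfixSA a), Lam_wi_succ hwi]
  have hC' : Lam (∑ e ∈ Finset.range K,
        (∑ f ∈ Finset.range (e+1), tB (d+1) e f) * w^(K-e))
      = ∑ e ∈ Finset.range K, (∑ f ∈ Finset.range (e+1), tB (d+1) e f)
          * (w^(K+1-e) - w + PowerSeries.X * ∑ t ∈ Finset.range (K-e), w^(t+1)) := by
    rw [show Lam (∑ e ∈ Finset.range K,
        (∑ f ∈ Finset.range (e+1), tB (d+1) e f) * w^(K-e))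
      = ∑ e ∈ Finset.range K,
          Lam ((∑ f ∈ Finset.range (e+1), tB (d+1) e f) * w^(K-e))
      from map_sum LamHom _ _]
    apply Finset.sum_congr rfl
    intro e he
    have hke : K - e = (K-1-e)+1 := by
      have := Finset.mem_range.1 he; omega
    rw [hke, Lam_smul (EfixSB e), Lam_w_succ (K-1-e),
      show (K-1-e)+2 = K+1-e by have := Finset.mem_range.1 he; omega,
      show (K-1-e)+1 = K-e by have := Finset.mem_range.1 he; omega]
  have hD' := Lam_w_succ K
  rw [hA', hB', hC', hD']
  have g1 : ∑ t ∈ Finset.range d, wi^t = ∑ a ∈ Finset.range d, wi^(d-1-a) :=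
    (Finset.sum_range_reflect (fun t => wi^t) d).symm
  have g2 : ∑ a ∈ Finset.range d, (∑ c ∈ Finset.range (K+1), tA (K+1) a c)
        * ((1 - PowerSeries.X) * wi^(d-1-a) - w
          - PowerSeries.X * ∑ t ∈ Finset.range (d-1-a), wi^t)
      = (1 - PowerSeries.X) * (∑ a ∈ Finset.range d,
          (∑ c ∈ Finset.range (K+1), tA (K+1) a c) * wi^(d-1-a))
        - (∑ a ∈ Finset.range d, ∑ c ∈ Finset.range (K+1), tA (K+1) a c) * w
        - ∑ b ∈ Finset.range d, (PowerSeries.X * ∑ a ∈ Finset.range b,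
            ∑ c ∈ Finset.range (K+1), tA (K+1) a c) * wi^(d-1-b) := by
    have t2 := tri d (fun a => (∑ c ∈ Finset.range (K+1), tA (K+1) a c) * PowerSeries.X)
      (fun t => wi^t)
    have t2' : ∑ b ∈ Finset.range d, (∑ a ∈ Finset.range b,
          (∑ c ∈ Finset.range (K+1), tA (K+1) a c) * PowerSeries.X) * wi^(d-1-b)
        = ∑ b ∈ Finset.range d, (PowerSeries.X * ∑ a ∈ Finset.range b,
            ∑ c ∈ Finset.range (K+1), tA (K+1) a c) * wi^(d-1-b) := by
      apply Finset.sum_congr rfl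
      intro b _
      rw [← Finset.sum_mul]
      ring
    rw [← t2', ← t2]
    rw [Finset.mul_sum, Finset.sum_mul, ← Finset.sum_sub_distrib, ← Finset.sum_sub_distrib]
    apply Finset.sum_congr rfl
    intro a _
    ring
  have g3 : ∑ e ∈ Finset.range K, (∑ f ∈ Finset.range (e+1), tB (d+1) e f)
        * (w^(K+1-e) - w + PowerSeries.X * ∑ t ∈ Finset.range (K-e), w^(t+1))
      = ∑ e ∈ Finset.range K, (∑ f ∈ Finset.range (e+1), tB (d+1) e f) * w^(K+1-e)
        - (∑ e ∈ Finset.range K, ∑ f ∈ Finset.range (e+1), tB (d+1) e f) * w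
        + ∑ b ∈ Finset.range K, (PowerSeries.X * ∑ e' ∈ Finset.range b,
            ∑ f ∈ Finset.range (e'+1), tB (d+1) e' f) * w^(K+1-b)
        + (PowerSeries.X * ∑ e ∈ Finset.range K,
            ∑ f ∈ Finset.range (e+1), tB (d+1) e f) * w := by
    have t3 := tri' K (fun e => (∑ f ∈ Finset.range (e+1), tB (d+1) e f) * PowerSeries.X)
      (fun t => w^(t+1))
    have hext : ∑ e ∈ Finset.range (K+1),
          ((∑ f ∈ Finset.range (e+1), tB (d+1) e f) * PowerSeries.X)
            * ∑ t ∈ Finset.range (K-e), w^(t+1)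
        = ∑ e ∈ Finset.range K,
          ((∑ f ∈ Finset.range (e+1), tB (d+1) e f) * PowerSeries.X)
            * ∑ t ∈ Finset.range (K-e), w^(t+1) := by
      rw [Finset.sum_range_succ, Nat.sub_self]
      simp
    have t3' : ∑ b ∈ Finset.range (K+1), (∑ e ∈ Finset.range b,
          (∑ f ∈ Finset.range (e+1), tB (d+1) e f) * PowerSeries.X) * w^((K-b)+1)
        = (∑ b ∈ Finset.range K, (PowerSeries.X * ∑ e' ∈ Finset.range b,
            ∑ f ∈ Finset.range (e'+1), tB (d+1) e' f) * w^(K+1-b))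
          + (PowerSeries.X * ∑ e ∈ Finset.range K,
              ∑ f ∈ Finset.range (e+1), tB (d+1) e f) * w := by
      rw [Finset.sum_range_succ, Nat.sub_self, zero_add, pow_one]
      refine congrArg₂ (· + ·) ?_ ?_
      · apply Finset.sum_congr rfl
        intro b hb
        rw [show (K-b)+1 = K+1-b by have := Finset.mem_range.1 hb; omega,
          ← Finset.sum_mul]
        ring
      · rw [← Finset.sum_mul]
        ring
    have hmain : ∑ e ∈ Finset.range K, ((∑ f ∈ Finset.range (e+1), tB (d+1) e f)
          * PowerSeries.X) * ∑ t ∈ Finset.range (K-e), w^(t+1)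
        = (∑ b ∈ Finset.range K, (PowerSeries.X * ∑ e' ∈ Finset.range b,
            ∑ f ∈ Finset.range (e'+1), tB (d+1) e' f) * w^(K+1-b))
          + (PowerSeries.X * ∑ e ∈ Finset.range K,
              ∑ f ∈ Finset.range (e+1), tB (d+1) e f) * w := by
      rw [← hext, t3, t3']
    have gsplit : ∑ e ∈ Finset.range K, (∑ f ∈ Finset.range (e+1), tB (d+1) e f)
          * (w^(K+1-e) - w + PowerSeries.X * ∑ t ∈ Finset.range (K-e), w^(t+1))
        = (∑ e ∈ Finset.range K, (∑ f ∈ Finset.range (e+1), tB (d+1) e f) * w^(K+1-e))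
          - (∑ e ∈ Finset.range K, ∑ f ∈ Finset.range (e+1), tB (d+1) e f) * w
          + ∑ e ∈ Finset.range K, ((∑ f ∈ Finset.range (e+1), tB (d+1) e f)
              * PowerSeries.X) * ∑ t ∈ Finset.range (K-e), w^(t+1) := by
      rw [Finset.sum_mul, ← Finset.sum_sub_distrib, ← Finset.sum_add_distrib]
      apply Finset.sum_congr rfl
      intro e _
      ring
    linear_combination gsplit + hmain
  have g4 : PowerSeries.X * ∑ t ∈ Finset.range (K+1), w^(t+1)
      = PowerSeries.X * (∑ e ∈ Finset.range K, w^(K+1-e)) + PowerSeries.X * w := by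
    have hr : ∑ t ∈ Finset.range (K+1), w^(t+1)
        = ∑ j ∈ Finset.range (K+1), w^(K+1-j) := by
      rw [← Finset.sum_range_reflect (fun t => w^(t+1)) (K+1)]
      apply Finset.sum_congr rfl
      intro j hj
      rw [show (K+1-1-j)+1 = K+1-j by have := Finset.mem_range.1 hj; omega]
    rw [hr, Finset.sum_range_succ, show K+1-K = 1 by omega, pow_one, mul_add]
  linear_combination (-(PowerSeries.X * (1 - PowerSeries.X)^(K+1))) * g1 - g2 + g3 - g4

lemma step {wi : R} (hwi : w * wi = 1) (K d : ℕ) :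
    Lam (G wi (K+1) (d+1)) = G wi (K+1+1) d :=
  (stepL hwi K d).trans (stepR wi K d).symm

lemma main {wi : R} (hwi : w * wi = 1) : ∀ K d : ℕ, Lam^[K+1] (wi^(K+1+d)) = G wi (K+1) d := by
  intro K
  induction K with
  | zero =>
      intro d
      simpa using base hwi d
  | succ K ih =>
      intro d
      rw [Function.iterate_succ']
      simp only [Function.comp_apply]
      rw [show K+1+1+d = K+1+(d+1) by omega, ih (d+1), step hwi K d]

lemma reindex1 (k d : ℕ) (F : ℕ → ℕ → R) :
    ∑ i ∈ Finset.Icc k (k+d-1), ∑ j ∈ Finset.Icc 1 k, F i j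
      = ∑ a ∈ Finset.range d, ∑ c ∈ Finset.range k, F (k+a) (k-c) := by
  by_cases hk : 1 ≤ k
  · apply Finset.sum_nbij' (fun i => i - k) (fun a => k + a)
    · intro i hi
      simp only [Finset.mem_Icc] at hi
      simp only [Finset.mem_range]
      omega
    · intro a ha
      simp only [Finset.mem_range] at ha
      simp only [Finset.mem_Icc]
      omega
    · intro i hi
      simp only [Finset.mem_Icc] at hi
      omega
    · intro a ha
      simp only [Finset.mem_range] at ha
      omega
    · intro i hi
      simp only [Finset.mem_Icc] at hi
      rw [show k + (i - k) = i by omega]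
      apply Finset.sum_nbij' (fun j => k - j) (fun c => k - c)
      · intro j hj
        simp only [Finset.mem_Icc] at hj
        simp only [Finset.mem_range]
        omega
      · intro c hc
        simp only [Finset.mem_range] at hc
        simp only [Finset.mem_Icc]
        omega
      · intro j hj
        simp only [Finset.mem_Icc] at hj
        omega
      · intro c hc
        simp only [Finset.mem_range] at hc
        omega
      · intro j hj
        simp only [Finset.mem_Icc] at hj
        rw [show k - (k - j) = j by omega]
  · have hk0 : k = 0 := by omega
    subst hk0
    simp

lemma reindex2 (K : ℕ) (F : ℕ → ℕ → R) :
    ∑ i ∈ Finset.Icc 1 K, ∑ j ∈ Finset.Icc 1 i, F i j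
      = ∑ e ∈ Finset.range K, ∑ f ∈ Finset.range (e+1), F (e+1) (f+1) := by
  apply Finset.sum_nbij' (fun i => i - 1) (fun e => e + 1)
  · intro i hi
    simp only [Finset.mem_Icc] at hi
    simp only [Finset.mem_range]
    omega
  · intro e he
    simp only [Finset.mem_range] at he
    simp only [Finset.mem_Icc]
    omega
  · intro i hi
    simp only [Finset.mem_Icc] at hi
    omega
  · intro e he
    simp only [Finset.mem_range] at he
    omega
  · intro i hi
    simp only [Finset.mem_Icc] at hi
    rw [show i - 1 + 1 = i by omega]
    apply Finset.sum_nbij' (fun j => j - 1) (fun f => f + 1)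
    · intro j hj
      simp only [Finset.mem_Icc] at hj
      simp only [Finset.mem_range]
      omega
    · intro f hf
      simp only [Finset.mem_range] at hf
      simp only [Finset.mem_Icc]
      omega
    · intro j hj
      simp only [Finset.mem_Icc] at hj
      omega
    · intro f hf
      simp only [Finset.mem_range] at hf
      omega
    · intro j hj
      simp only [Finset.mem_Icc] at hj
      rw [show j - 1 + 1 = j by omega]

/-- For 1 ≤ k ≤ m, the explicit expansion of Λ^{(k)}(1/w^m), where w = 1+zu and `wi` = 1/w:
Λ^{(k)}(1/w^m) = (1−z)^k/w^{m−k}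
  − Σ_{i=k}^{m−1} Σ_{j=1}^{k} (−1)^{k+j} z^{k−j+1} w^{−(m−i−1)} C(k,j−1) C(i−j+1,k−j)
  + Σ_{i=1}^{k−1} Σ_{j=1}^{i} (−1)^{j−1} z^j w^{k−i} C(i−1,j−1) C(m−k+j−1,j) − w^k. -/
theorem Lam_iterate_expansion (m k : ℕ) (hk : 1 ≤ k) (hkm : k ≤ m)
    (wi : PowerSeries (Polynomial ℚ)) (hwi : w * wi = 1) :
    Lam^[k] (wi^m)
      = (1 - PowerSeries.X)^k * wi^(m-k)
        - ∑ i ∈ Finset.Icc k (m-1), ∑ j ∈ Finset.Icc 1 k,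
            (-1 : PowerSeries (Polynomial ℚ))^(k+j) * PowerSeries.X^(k-j+1) * wi^(m-i-1) *
              (Nat.choose k (j-1) : PowerSeries (Polynomial ℚ)) *
              (Nat.choose (i-j+1) (k-j) : PowerSeries (Polynomial ℚ))
        + ∑ i ∈ Finset.Icc 1 (k-1), ∑ j ∈ Finset.Icc 1 i,
            (-1 : PowerSeries (Polynomial ℚ))^(j-1) * PowerSeries.X^j * w^(k-i) *
              (Nat.choose (i-1) (j-1) : PowerSeries (Polynomial ℚ)) *
              (Nat.choose (m-k+j-1) j : PowerSeries (Polynomial ℚ))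
        - w^k := by
  obtain ⟨K, rfl⟩ : ∃ K, k = K + 1 := ⟨k - 1, by omega⟩
  obtain ⟨d, rfl⟩ : ∃ d, m = K + 1 + d := ⟨m - (K+1), by omega⟩
  rw [main hwi K d, G_succ wi K d]
  rw [show K + 1 + d - (K + 1) = d by omega]
  rw [show K + 1 - 1 = K from rfl]
  rw [reindex1 (K+1) d, reindex2 K]
  have hB : ∑ a ∈ Finset.range d, ∑ c ∈ Finset.range (K+1),
        (-1 : R)^((K+1)+((K+1)-c)) * PowerSeries.X^((K+1)-((K+1)-c)+1)
          * wi^((K+1+d)-((K+1)+a)-1)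
          * (Nat.choose (K+1) (((K+1)-c)-1) : R)
          * (Nat.choose (((K+1)+a)-((K+1)-c)+1) ((K+1)-((K+1)-c)) : R)
      = ∑ a ∈ Finset.range d, (∑ c ∈ Finset.range (K+1), tA (K+1) a c) * wi^(d-1-a) := by
    apply Finset.sum_congr rfl
    intro a ha
    rw [Finset.sum_mul]
    apply Finset.sum_congr rfl
    intro c hc
    have hcK := Finset.mem_range.1 hc
    have haD := Finset.mem_range.1 ha
    rw [show (K+1)+((K+1)-c) = c + 2*((K+1)-c) by omega,
      pow_add, pow_mul, neg_one_sq, one_pow, mul_one,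
      show (K+1)-((K+1)-c)+1 = c+1 by omega,
      show (K+1+d)-((K+1)+a)-1 = d-1-a by omega,
      show ((K+1)-c)-1 = (K+1)-(c+1) by omega,
      Nat.choose_symm (by omega : c+1 ≤ K+1),
      show ((K+1)+a)-((K+1)-c)+1 = a+c+1 by omega,
      show (K+1)-((K+1)-c) = c by omega]
    simp only [tA]
    ring
  have hC : ∑ e ∈ Finset.range K, ∑ f ∈ Finset.range (e+1),
        (-1 : R)^((f+1)-1) * PowerSeries.X^(f+1) * w^((K+1)-(e+1))
          * (Nat.choose ((e+1)-1) ((f+1)-1) : R)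
          * (Nat.choose (d+(f+1)-1) (f+1) : R)
      = ∑ e ∈ Finset.range K, (∑ f ∈ Finset.range (e+1), tB d e f) * w^(K-e) := by
    apply Finset.sum_congr rfl
    intro e he
    rw [Finset.sum_mul]
    apply Finset.sum_congr rfl
    intro f hf
    rw [show (f+1)-1 = f from rfl, show (e+1)-1 = e from rfl,
      show (K+1)-(e+1) = K-e by omega,
      show d+(f+1)-1 = d+f by omega]
    simp only [tB]
    ring
  rw [hB, hC]
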